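/- For the Strauss process with density f(x) = Z⁻¹·β₁^{#x}·β₂^{s(x)} where 0 < β₂ ≤ 1 and s(x) counts pairs within distance R, define p(x,w,v) = 1[ρ(v,w) ≤ R]·(1−β₂)·β₂^{n(v,x)−1}, where n(v,x) = #{w ∈ x : ρ(v,w) ≤ R}. Then f(x)·p(x,w,v) = f(x+v−w)·p(x+v−w,v,w) for all configurations x, w ∈ x with ρ(v,w) ≤ R. -/

import Mathlib

open Real

private lemma strauss_T_insert {S : Type*} [MetricSpace S] [DecidableEq S]
    (R : ℝ) (u : S) (y : Finset S) (hu : u ∉ y) :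
    (((insert u y).offDiag.filter fun q => dist q.1 q.2 ≤ R)).card
      = ((y.offDiag.filter fun q => dist q.1 q.2 ≤ R)).card
        + 2 * ((y.filter fun b => dist u b ≤ R)).card := by
  rw [Finset.offDiag_insert hu, Finset.filter_union, Finset.filter_union]
  have h1 : (({u} ×ˢ y).filter fun q => dist q.1 q.2 ≤ R).card
      = ((y.filter fun b => dist u b ≤ R)).card := by
    rw [Finset.singleton_product, Finset.filter_map, Finset.card_map]
    rfl
  have h2 : ((y ×ˢ {u}).filter fun q => dist q.1 q.2 ≤ R).card
      = ((y.filter fun b => dist u b ≤ R)).card := by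
    rw [Finset.product_singleton, Finset.filter_map, Finset.card_map]
    congr 1
    apply Finset.filter_congr
    intro b _
    simp [Function.comp, dist_comm]
  have d1 : Disjoint (y.offDiag.filter fun q => dist q.1 q.2 ≤ R)
      (({u} ×ˢ y).filter fun q => dist q.1 q.2 ≤ R) := by
    apply Finset.disjoint_filter_filter
    rw [Finset.disjoint_left]
    rintro ⟨a, b⟩ hab hab'
    rw [Finset.mem_offDiag] at hab
    rw [Finset.mem_product, Finset.mem_singleton] at hab'
    exact hu (hab'.1 ▸ hab.1)
  have d2 : Disjoint ((y.offDiag.filter fun q => dist q.1 q.2 ≤ R) ∪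
      (({u} ×ˢ y).filter fun q => dist q.1 q.2 ≤ R))
      ((y ×ˢ {u}).filter fun q => dist q.1 q.2 ≤ R) := by
    rw [Finset.disjoint_union_left]
    constructor
    · apply Finset.disjoint_filter_filter
      rw [Finset.disjoint_left]
      rintro ⟨a, b⟩ hab hab'
      rw [Finset.mem_offDiag] at hab
      rw [Finset.mem_product, Finset.mem_singleton] at hab'
      exact hu (hab'.2 ▸ hab.2.1)
    · apply Finset.disjoint_filter_filter
      rw [Finset.disjoint_left]
      rintro ⟨a, b⟩ hab hab'
      rw [Finset.mem_product, Finset.mem_singleton] at hab hab'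
      exact hu (hab.1 ▸ hab'.1)
  rw [Finset.card_union_of_disjoint d2, Finset.card_union_of_disjoint d1, h1, h2]
  ring

/-- For the Strauss density
`f(x) = Z⁻¹ β₁^{#x} β₂^{s(x)}` (with `s(x)` the number of unordered pairs of
points of `x` within distance `R`, computed as half the number of ordered
pairs), the swap probabilities
`p(x,w,v) = 1[ρ(v,w) ≤ R]·(1−β₂)·β₂^{n(v,x)−1}` satisfy the detailed balance
relation `f(x)·p(x,w,v) = f(x+v−w)·p(x+v−w,v,w)`. -/
theorem strauss_swap_detailed_balance {S : Type*} [MetricSpace S] [DecidableEq S]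
    (β₁ β₂ R Z : ℝ) (hβ₁ : 0 < β₁) (hβ₂0 : 0 < β₂) (hβ₂1 : β₂ ≤ 1) (hR : 0 < R)
    (hZ : 0 < Z)
    (f : Finset S → ℝ)
    (hf : ∀ x : Finset S,
      f x = Z⁻¹ * β₁ ^ x.card *
        β₂ ^ ((((x.offDiag.filter fun q => dist q.1 q.2 ≤ R).card : ℝ)) / 2))
    (n : S → Finset S → ℕ)
    (hn : ∀ (v : S) (x : Finset S), n v x = (x.filter fun w => dist v w ≤ R).card)
    (p : Finset S → S → S → ℝ)
    (hp : ∀ (x : Finset S) (w v : S),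
      p x w v = (if dist v w ≤ R then (1 : ℝ) else 0) * (1 - β₂) *
        β₂ ^ ((n v x : ℝ) - 1))
    (x : Finset S) (w : S) (hw : w ∈ x) (v : S) (hv : v ∉ x)
    (hvw : dist v w ≤ R) :
    f x * p x w v =
      f ((insert v x).erase w) * p ((insert v x).erase w) v w := by
  set y := x.erase w with hy
  have hvw' : v ≠ w := fun h => hv (h ▸ hw)
  have hwy : w ∉ y := Finset.notMem_erase w x
  have hvy : v ∉ y := fun h => hv (Finset.mem_of_mem_erase h)
  have hx : x = insert w y := (Finset.insert_erase hw).symm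
  have hx' : (insert v x).erase w = insert v y := Finset.erase_insert_of_ne hvw'
  have hcard : ((insert v x).erase w).card = x.card := by
    rw [hx', Finset.card_insert_of_notMem hvy, hx, Finset.card_insert_of_notMem hwy]
  set a := ((y.filter fun b => dist w b ≤ R)).card with ha
  set b := ((y.filter fun b => dist v b ≤ R)).card with hb
  have hTx : ((x.offDiag.filter fun q => dist q.1 q.2 ≤ R)).card
      = ((y.offDiag.filter fun q => dist q.1 q.2 ≤ R)).card + 2 * a := by
    rw [hx]; exact strauss_T_insert R w y hwy
  have hTx' : ((((insert v x).erase w).offDiag.filter fun q => dist q.1 q.2 ≤ R)).card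
      = ((y.offDiag.filter fun q => dist q.1 q.2 ≤ R)).card + 2 * b := by
    rw [hx']; exact strauss_T_insert R v y hvy
  have hnv : n v x = b + 1 := by
    rw [hn, hx, Finset.filter_insert, if_pos hvw,
      Finset.card_insert_of_notMem (fun h => hwy (Finset.mem_of_mem_filter _ h))]
  have hnw : n w ((insert v x).erase w) = a + 1 := by
    rw [hn, hx', Finset.filter_insert, if_pos (by rwa [dist_comm]),
      Finset.card_insert_of_notMem (fun h => hvy (Finset.mem_of_mem_filter _ h))]
  have hwv : dist w v ≤ R := by rwa [dist_comm]
  rw [hf, hf, hp, hp, if_pos hvw, if_pos hwv, hcard, hnv, hnw]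
  have hexp : ((((x.offDiag.filter fun q => dist q.1 q.2 ≤ R)).card : ℝ)) / 2
        + (((b + 1 : ℕ) : ℝ) - 1)
      = (((((insert v x).erase w).offDiag.filter fun q => dist q.1 q.2 ≤ R)).card : ℝ) / 2
        + (((a + 1 : ℕ) : ℝ) - 1) := by
    rw [hTx, hTx']; push_cast; ring
  have key : β₂ ^ ((((x.offDiag.filter fun q => dist q.1 q.2 ≤ R)).card : ℝ) / 2)
        * β₂ ^ (((b + 1 : ℕ) : ℝ) - 1)
      = β₂ ^ ((((((insert v x).erase w).offDiag.filter fun q => dist q.1 q.2 ≤ R)).card : ℝ) / 2)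
        * β₂ ^ (((a + 1 : ℕ) : ℝ) - 1) := by
    rw [← Real.rpow_add hβ₂0, ← Real.rpow_add hβ₂0, hexp]
  linear_combination (Z⁻¹ * β₁ ^ x.card * (1 - β₂)) * key
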